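/- arXiv:1709.09858 — 7 statements merged into one kernel-verified Lean document; each statement's English description precedes it below -/
import Mathlib

section
/- Let 0 < r < s. For all probability measures φ and ψ on ℝ with characteristic functions φ̂ and ψ̂, if d_s(φ,ψ) = sup_{ξ≠0} |φ̂(ξ) − ψ̂(ξ)|/|ξ|^s is finite, then D_r(φ,ψ) = ∫_ℝ |φ̂(ξ) − ψ̂(ξ)|/|ξ|^{1+r} dξ satisfies D_r(φ,ψ) ≤ c(r,s)·d_s(φ,ψ)^{r/s}, where c(r,s) = 2^{2−r/s}·s/(r(s−r)). -/
open MeasureTheory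

/-- The characteristic function (Fourier transform) of a measure on `ℝ`,
`φ̂(ξ) = ∫ e^{-iξv} dφ(v)`. -/
noncomputable def charFn (μ : Measure ℝ) (ξ : ℝ) : ℂ :=
  ∫ v, Complex.exp (-(ξ * v) * Complex.I) ∂μ

/-- The Fourier-based metric `d_s(φ,ψ) = sup_{ξ ≠ 0} |φ̂(ξ) - ψ̂(ξ)| / |ξ|^s`. -/
noncomputable def dFourier (s : ℝ) (φ ψ : Measure ℝ) : ℝ :=
  ⨆ ξ : {ξ : ℝ // ξ ≠ 0}, ‖charFn φ ξ.1 - charFn ψ ξ.1‖ / |ξ.1| ^ s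

/-- The Fourier-based metric `D_s(φ,ψ) = ∫_ℝ |φ̂(ξ) - ψ̂(ξ)| / |ξ|^{1+s} dξ`. -/
noncomputable def DFourier (s : ℝ) (φ ψ : Measure ℝ) : ℝ :=
  ∫ ξ : ℝ, ‖charFn φ ξ - charFn ψ ξ‖ / |ξ| ^ (1 + s)

lemma my_norm_charFn_le_one (μ : Measure ℝ) [IsProbabilityMeasure μ] (ξ : ℝ) :
    ‖charFn μ ξ‖ ≤ 1 := by
  have h := norm_integral_le_integral_norm (μ := μ)
    (f := fun v => Complex.exp (-(ξ * v) * Complex.I))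
  refine h.trans_eq ?_
  have : ∀ v : ℝ, ‖Complex.exp (-(ξ * v) * Complex.I)‖ = 1 := by
    intro v
    have : (-(↑ξ * ↑v) * Complex.I : ℂ) = (↑(-(ξ * v)) : ℝ) * Complex.I := by push_cast; ring
    rw [this, Complex.norm_exp_ofReal_mul_I]
  rw [integral_congr_ae (Filter.Eventually.of_forall this)]
  simp

lemma my_integrable_comp_abs {G : ℝ → ℝ} (h : IntegrableOn G (Set.Ioi (0:ℝ))) :
    Integrable (fun x => G |x|) := by
  have hIoi : IntegrableOn (fun x => G |x|) (Set.Ioi (0:ℝ)) :=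
    h.congr_fun (fun x hx => by rw [abs_of_pos hx]) measurableSet_Ioi
  have int_Iic : IntegrableOn (fun x => G |x|) (Set.Iic (0:ℝ)) := by
    rw [← Measure.map_neg_eq_self (volume : Measure ℝ)]
    have m : MeasurableEmbedding fun x : ℝ => -x := (Homeomorph.neg ℝ).measurableEmbedding
    rw [m.integrableOn_map_iff]
    simp_rw [Function.comp_def, abs_neg, Set.neg_preimage, Set.neg_Iic, neg_zero]
    exact Iff.mpr integrableOn_Ici_iff_integrableOn_Ioi hIoi
  rw [← integrableOn_univ, ← Set.Iic_union_Ioi (a := (0:ℝ))]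
  exact int_Iic.union hIoi

lemma my_arith (r s d : ℝ) (hr : 0 < r) (hrs : r < s) (hd : 0 < d) :
    2 * (d * ((2/d) ^ (1 - r/s)) / (s - r) + 2 * ((2/d) ^ (-(r/s))) / r)
      = 2 ^ (2 - r/s) * (s / (r * (s - r))) * d ^ (r/s) := by
  have hs : 0 < s := hr.trans hrs
  have hsr : 0 < s - r := by linarith
  have hA : (0:ℝ) < 2 / d := by positivity
  have h1 : (2/d) ^ (-(r/s)) = d ^ (r/s) / 2 ^ (r/s) := by
    rw [Real.rpow_neg hA.le, Real.div_rpow (by norm_num) hd.le, inv_div]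
  have h2 : (2/d) ^ (1 - r/s) = (2/d) * ((2/d) ^ (-(r/s))) := by
    rw [Real.rpow_sub hA, Real.rpow_one, Real.rpow_neg hA.le, div_eq_mul_inv]
  have h3 : (2:ℝ) ^ (2 - r/s) = 4 / 2 ^ (r/s) := by
    rw [Real.rpow_sub (by norm_num)]
    norm_num
  rw [h2, h1, h3]
  have hd2 : (0:ℝ) < 2 ^ (r/s) := Real.rpow_pos_of_pos (by norm_num) _
  field_simp
  ring

theorem stmt_0 (r s : ℝ) (hr : 0 < r) (hrs : r < s)
    (φ ψ : Measure ℝ) [IsProbabilityMeasure φ] [IsProbabilityMeasure ψ]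
    (hfin : BddAbove (Set.range fun ξ : {ξ : ℝ // ξ ≠ 0} =>
      ‖charFn φ ξ.1 - charFn ψ ξ.1‖ / |ξ.1| ^ s)) :
    DFourier r φ ψ ≤
      2 ^ (2 - r / s) * (s / (r * (s - r))) * dFourier s φ ψ ^ (r / s) := by
  have hs : 0 < s := hr.trans hrs
  set d := dFourier s φ ψ with hdd
  set f : ℝ → ℝ := fun ξ => ‖charFn φ ξ - charFn ψ ξ‖ / |ξ| ^ (1 + r) with hf
  have hDf : DFourier r φ ψ = ∫ ξ, f ξ := rfl
  have hne : ∀ᵐ ξ : ℝ, ξ ≠ (0:ℝ) := by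
    rw [ae_iff]
    simpa using measure_singleton (0:ℝ) (μ := (volume : Measure ℝ))
  have hfnn : ∀ ξ : ℝ, 0 ≤ f ξ := fun ξ => by positivity
  have hUB : ∀ ξ : ℝ, ξ ≠ 0 → ‖charFn φ ξ - charFn ψ ξ‖ ≤ d * |ξ| ^ s := by
    intro ξ hξ
    have h := le_ciSup hfin ⟨ξ, hξ⟩
    have hp : (0:ℝ) < |ξ| ^ s := Real.rpow_pos_of_pos (abs_pos.mpr hξ) _
    rw [div_le_iff₀ hp] at h
    exact h
  have hd0 : 0 ≤ d := by
    have h := le_ciSup hfin ⟨1, one_ne_zero⟩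
    exact le_trans (by positivity) h
  have h2bd : ∀ ξ : ℝ, ‖charFn φ ξ - charFn ψ ξ‖ ≤ 2 := by
    intro ξ
    calc ‖charFn φ ξ - charFn ψ ξ‖ ≤ ‖charFn φ ξ‖ + ‖charFn ψ ξ‖ := norm_sub_le _ _
    _ ≤ 2 := by
      have := my_norm_charFn_le_one φ ξ
      have := my_norm_charFn_le_one ψ ξ
      linarith
  rcases eq_or_lt_of_le hd0 with hd | hd
  · -- d = 0
    have hz : ∀ᵐ ξ : ℝ, f ξ = 0 := by
      filter_upwards [hne] with ξ hξ
      have h := hUB ξ hξ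
      rw [← hd] at h
      simp only [zero_mul] at h
      have h0 : ‖charFn φ ξ - charFn ψ ξ‖ = 0 := le_antisymm h (norm_nonneg _)
      show ‖charFn φ ξ - charFn ψ ξ‖ / |ξ| ^ (1 + r) = 0
      rw [h0, zero_div]
    rw [hDf, integral_eq_zero_of_ae hz, ← hd, Real.zero_rpow (by positivity)]
    simp
  · -- d > 0
    set R : ℝ := (2 / d) ^ (1 / s) with hRdef
    have hR : 0 < R := Real.rpow_pos_of_pos (by positivity) _
    set G : ℝ → ℝ := fun t => if t ≤ R then d * t ^ (s - 1 - r) else 2 * t ^ (-(1 + r)) with hG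
    have hmono : ∀ᵐ ξ : ℝ, f ξ ≤ G |ξ| := by
      filter_upwards [hne] with ξ hξ
      have habs : 0 < |ξ| := abs_pos.mpr hξ
      have hp : (0:ℝ) < |ξ| ^ (1 + r) := Real.rpow_pos_of_pos habs _
      by_cases hcase : |ξ| ≤ R
      · have : f ξ ≤ d * |ξ| ^ s / |ξ| ^ (1 + r) :=
          div_le_div_of_nonneg_right (hUB ξ hξ) hp.le
        rw [hG]; simp only [hcase, if_true]
        calc f ξ ≤ d * |ξ| ^ s / |ξ| ^ (1 + r) := this
        _ = d * |ξ| ^ (s - 1 - r) := by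
          rw [mul_div_assoc, ← Real.rpow_sub habs]
          ring_nf
      · rw [hG]; simp only [hcase, if_false]
        calc f ξ ≤ 2 / |ξ| ^ (1 + r) := div_le_div_of_nonneg_right (h2bd ξ) hp.le
        _ = 2 * |ξ| ^ (-(1 + r)) := by
          rw [Real.rpow_neg habs.le]; ring
    have hintG : IntegrableOn G (Set.Ioi (0:ℝ)) := by
      have hsplit : Set.Ioi (0:ℝ) = Set.Ioc 0 R ∪ Set.Ioi R := (Set.Ioc_union_Ioi_eq_Ioi hR.le).symm
      rw [hsplit]
      apply IntegrableOn.union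
      · have h1 : IntegrableOn (fun t : ℝ => d * t ^ (s - 1 - r)) (Set.Ioc (0:ℝ) R) := by
          have : IntegrableOn (fun t : ℝ => t ^ (s - 1 - r)) (Set.Ioo (0:ℝ) R) := by
            rw [intervalIntegral.integrableOn_Ioo_rpow_iff hR]
            linarith
          have h2 : IntegrableOn (fun t : ℝ => t ^ (s - 1 - r)) (Set.Ioc (0:ℝ) R) :=
            this.congr_set_ae Ioo_ae_eq_Ioc.symm
          exact h2.const_mul d
        exact h1.congr_fun (fun t ht => by rw [hG]; simp [ht.2]) measurableSet_Ioc
      · have h1 : IntegrableOn (fun t : ℝ => 2 * t ^ (-(1 + r))) (Set.Ioi R) :=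
          (integrableOn_Ioi_rpow_of_lt (by linarith) hR).const_mul 2
        exact h1.congr_fun (fun t ht => by rw [hG]; simp [not_le.mpr (Set.mem_Ioi.mp ht)]) measurableSet_Ioi
    have hintg : Integrable (fun ξ : ℝ => G |ξ|) := my_integrable_comp_abs hintG
    have hle : ∫ ξ, f ξ ≤ ∫ ξ, G |ξ| :=
      integral_mono_of_nonneg (Filter.Eventually.of_forall hfnn) hintg hmono
    have hval : ∫ ξ : ℝ, G |ξ| = 2 * (d * (R ^ (s - r)) / (s - r) + 2 * (R ^ (-r)) / r) := by
      rw [integral_comp_abs]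
      have hsplit : ∫ t in Set.Ioi (0:ℝ), G t
          = (∫ t in Set.Ioc (0:ℝ) R, G t) + ∫ t in Set.Ioi R, G t := by
        rw [← setIntegral_union (Set.Ioc_disjoint_Ioi le_rfl) measurableSet_Ioi
          (hintG.mono_set (by rw [← Set.Ioc_union_Ioi_eq_Ioi hR.le]; exact Set.subset_union_left))
          (hintG.mono_set (by rw [← Set.Ioc_union_Ioi_eq_Ioi hR.le]; exact Set.subset_union_right)),
          Set.Ioc_union_Ioi_eq_Ioi hR.le]
      rw [hsplit]
      have hI1 : ∫ t in Set.Ioc (0:ℝ) R, G t = d * (R ^ (s - r)) / (s - r) := by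
        rw [setIntegral_congr_fun measurableSet_Ioc
          (g := fun t : ℝ => d * t ^ (s - 1 - r)) (fun t ht => by rw [hG]; simp [ht.2])]
        rw [← intervalIntegral.integral_of_le hR.le, intervalIntegral.integral_const_mul,
          integral_rpow (Or.inl (by linarith))]
        rw [Real.zero_rpow (by intro h; rw [show s - 1 - r + 1 = s - r by ring] at h; linarith [h ▸ (show (0:ℝ) < s - r by linarith)])]
        ring_nf
      have hI2 : ∫ t in Set.Ioi R, G t = 2 * (R ^ (-r)) / r := by
        rw [setIntegral_congr_fun measurableSet_Ioi
          (g := fun t : ℝ => 2 * t ^ (-(1 + r))) (fun t ht => by rw [hG]; simp [not_le.mpr (Set.mem_Ioi.mp ht)])]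
        rw [integral_const_mul, integral_Ioi_rpow_of_lt (by linarith) hR]
        rw [show -(1 + r) + 1 = -r by ring]
        field_simp
      rw [hI1, hI2]
    have hRsr : R ^ (s - r) = (2/d) ^ (1 - r/s) := by
      rw [hRdef, ← Real.rpow_mul (by positivity)]
      congr 1
      field_simp
    have hRr : R ^ (-r) = (2/d) ^ (-(r/s)) := by
      rw [hRdef, ← Real.rpow_mul (by positivity)]
      congr 1
      field_simp
    calc DFourier r φ ψ = ∫ ξ, f ξ := hDf
    _ ≤ ∫ ξ : ℝ, G |ξ| := hle
    _ = 2 * (d * (R ^ (s - r)) / (s - r) + 2 * (R ^ (-r)) / r) := hval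
    _ = 2 ^ (2 - r / s) * (s / (r * (s - r))) * d ^ (r / s) := by
      rw [hRsr, hRr]
      exact my_arith r s d hr hrs hd
end

section
/- Let p ≥ 1 and 0 < r < s. For all probability measures φ and ψ on ℝ with characteristic functions φ̂ and ψ̂, if d_s(φ,ψ) = sup_{ξ≠0} |φ̂(ξ) − ψ̂(ξ)|/|ξ|^s is finite, then D_{r,p}(φ,ψ) = (∫_ℝ |ξ|^{−(pr+1)} |φ̂(ξ) − ψ̂(ξ)|^p dξ)^{1/p} satisfies D_{r,p}(φ,ψ) ≤ c(p,r,s)·d_s(φ,ψ)^{r/s}, where c(p,r,s) = 2^{1−r/s}·(2s/(p r (s−r)))^{1/p}. -/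
open MeasureTheory

/-- The Fourier-based metric
`D_{s,p}(φ,ψ) = (∫_ℝ |ξ|^{-(ps+1)} |φ̂(ξ) - ψ̂(ξ)|^p dξ)^{1/p}`. -/
noncomputable def DFourierP (s p : ℝ) (φ ψ : Measure ℝ) : ℝ :=
  (∫ ξ : ℝ, |ξ| ^ (-(p * s + 1)) * ‖charFn φ ξ - charFn ψ ξ‖ ^ p) ^ (1 / p)

theorem stmt_1 (p r s : ℝ) (hp : 1 ≤ p) (hr : 0 < r) (hrs : r < s)
    (φ ψ : Measure ℝ) [IsProbabilityMeasure φ] [IsProbabilityMeasure ψ]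
    (hfin : BddAbove (Set.range fun ξ : {ξ : ℝ // ξ ≠ 0} =>
      ‖charFn φ ξ.1 - charFn ψ ξ.1‖ / |ξ.1| ^ s)) :
    DFourierP r p φ ψ ≤
      2 ^ (1 - r / s) * (2 * s / (p * r * (s - r))) ^ (1 / p) *
        dFourier s φ ψ ^ (r / s) := by
  classical
  have hs : 0 < s := hr.trans hrs
  have hp0 : 0 < p := lt_of_lt_of_le one_pos hp
  have hsr : 0 < s - r := sub_pos.mpr hrs
  have hpr : 0 < p * r := mul_pos hp0 hr
  have hpsr : 0 < p * s - p * r := by nlinarith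
  set d : ℝ := dFourier s φ ψ with hd
  have hd_def : d = ⨆ ξ : {ξ : ℝ // ξ ≠ 0},
      ‖charFn φ ξ.1 - charFn ψ ξ.1‖ / |ξ.1| ^ s := rfl
  -- the characteristic function is bounded by 1
  have hchar : ∀ (μ : Measure ℝ) [IsProbabilityMeasure μ] (ξ : ℝ), ‖charFn μ ξ‖ ≤ 1 := by
    intro μ _ ξ
    have := norm_integral_le_of_norm_le_const (μ := μ) (C := 1)
      (f := fun v : ℝ => Complex.exp (-(ξ * v) * Complex.I))
      (ae_of_all _ fun v => by simp [Complex.norm_exp])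
    simpa [charFn] using this
  have hΔ2 : ∀ ξ : ℝ, ‖charFn φ ξ - charFn ψ ξ‖ ≤ 2 := by
    intro ξ
    calc ‖charFn φ ξ - charFn ψ ξ‖ ≤ ‖charFn φ ξ‖ + ‖charFn ψ ξ‖ := norm_sub_le _ _
    _ ≤ 1 + 1 := add_le_add (hchar φ ξ) (hchar ψ ξ)
    _ = 2 := by norm_num
  have hdle : ∀ ξ : ℝ, ξ ≠ 0 → ‖charFn φ ξ - charFn ψ ξ‖ ≤ d * |ξ| ^ s := by
    intro ξ hξ
    have h1 : ‖charFn φ ξ - charFn ψ ξ‖ / |ξ| ^ s ≤ d := le_ciSup hfin ⟨ξ, hξ⟩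
    have h2 : (0:ℝ) < |ξ| ^ s := Real.rpow_pos_of_pos (abs_pos.mpr hξ) s
    calc ‖charFn φ ξ - charFn ψ ξ‖ = ‖charFn φ ξ - charFn ψ ξ‖ / |ξ| ^ s * |ξ| ^ s := by
          field_simp
    _ ≤ d * |ξ| ^ s := mul_le_mul_of_nonneg_right h1 h2.le
  have hd0 : 0 ≤ d := by
    have h1 : ‖charFn φ (1:ℝ) - charFn ψ (1:ℝ)‖ / |(1:ℝ)| ^ s ≤ d :=
      le_ciSup hfin ⟨(1:ℝ), one_ne_zero⟩
    refine le_trans ?_ h1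
    positivity
  have hfnonneg : ∀ ξ : ℝ, 0 ≤ |ξ| ^ (-(p * r + 1)) * ‖charFn φ ξ - charFn ψ ξ‖ ^ p := by
    intro ξ; positivity
  have hRHSnn : 0 ≤ 2 ^ (1 - r / s) * (2 * s / (p * r * (s - r))) ^ (1 / p) * d ^ (r / s) := by
    have h1 : (0:ℝ) < 2 * s / (p * r * (s - r)) :=
      div_pos (by positivity) (mul_pos hpr hsr)
    have h2 : (0:ℝ) ≤ (2:ℝ) ^ (1 - r / s) := Real.rpow_nonneg (by norm_num) _
    exact mul_nonneg (mul_nonneg h2 (Real.rpow_nonneg h1.le _)) (Real.rpow_nonneg hd0 _)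
  rcases eq_or_lt_of_le hd0 with hdzero | hdpos
  · -- degenerate case d = 0
    have hint : (fun ξ : ℝ => |ξ| ^ (-(p * r + 1)) * ‖charFn φ ξ - charFn ψ ξ‖ ^ p)
        = fun _ => (0:ℝ) := by
      funext ξ
      by_cases hξ : ξ = 0
      · subst hξ
        rw [abs_zero, Real.zero_rpow (by nlinarith : -(p * r + 1) ≠ 0), zero_mul]
      · have h1 := hdle ξ hξ
        rw [← hdzero] at h1
        have h0 : ‖charFn φ ξ - charFn ψ ξ‖ = 0 :=
          le_antisymm (by simpa using h1) (norm_nonneg _)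
        rw [h0, Real.zero_rpow hp0.ne', mul_zero]
    rw [DFourierP, hint, integral_zero, Real.zero_rpow (by positivity : (1:ℝ)/p ≠ 0)]
    exact hRHSnn
  · -- main case d > 0
    set R : ℝ := (2 / d) ^ s⁻¹ with hRdef
    have hR : 0 < R := Real.rpow_pos_of_pos (by positivity) _
    have hRs : d * R ^ s = 2 := by
      have h1 : R ^ s = 2 / d := Real.rpow_inv_rpow (by positivity) hs.ne'
      rw [h1]; field_simp
    set G : ℝ → ℝ := fun x => min ((2:ℝ) ^ p) (d ^ p * x ^ (p * s)) * x ^ (-(p * r + 1))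
      with hGdef
    have hGpos : ∀ x : ℝ, 0 < x → 0 ≤ G x := by
      intro x hx
      have h1 : (0:ℝ) ≤ min ((2:ℝ) ^ p) (d ^ p * x ^ (p * s)) :=
        le_min (by positivity) (by positivity)
      exact mul_nonneg h1 (Real.rpow_nonneg hx.le _)
    have hGmeas : Measurable G := by
      rw [hGdef]; fun_prop
    have ha : (-1:ℝ) < p * s - (p * r + 1) := by linarith
    have hb : -(p * r + 1) < (-1:ℝ) := by linarith
    -- majorants
    have hmaj1 : IntegrableOn (fun x : ℝ => d ^ p * x ^ (p * s - (p * r + 1))) (Set.Ioc 0 R) := by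
      have h1 : IntervalIntegrable (fun x : ℝ => x ^ (p * s - (p * r + 1))) volume 0 R :=
        intervalIntegral.intervalIntegrable_rpow' ha
      exact ((intervalIntegrable_iff_integrableOn_Ioc_of_le hR.le).mp h1).const_mul _
    have hmaj2 : IntegrableOn (fun x : ℝ => (2:ℝ) ^ p * x ^ (-(p * r + 1))) (Set.Ioi R) :=
      (integrableOn_Ioi_rpow_of_lt hb hR).const_mul _
    -- pointwise bounds for G
    have hGle1 : ∀ x ∈ Set.Ioc (0:ℝ) R, G x ≤ d ^ p * x ^ (p * s - (p * r + 1)) := by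
      intro x hx
      have hx0 : 0 < x := hx.1
      calc G x ≤ d ^ p * x ^ (p * s) * x ^ (-(p * r + 1)) :=
            mul_le_mul_of_nonneg_right (min_le_right _ _) (Real.rpow_nonneg hx0.le _)
      _ = d ^ p * x ^ (p * s - (p * r + 1)) := by
            rw [mul_assoc, ← Real.rpow_add hx0]
            ring_nf
    have hGle2 : ∀ x ∈ Set.Ioi R, G x ≤ (2:ℝ) ^ p * x ^ (-(p * r + 1)) := by
      intro x hx
      have hx0 : (0:ℝ) < x := hR.trans hx
      exact mul_le_mul_of_nonneg_right (min_le_left _ _) (Real.rpow_nonneg hx0.le _)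
    have hG1 : IntegrableOn G (Set.Ioc 0 R) := by
      apply Integrable.mono' hmaj1 (hGmeas.aestronglyMeasurable.restrict)
      filter_upwards [ae_restrict_mem measurableSet_Ioc] with x hx
      rw [Real.norm_eq_abs, abs_of_nonneg (hGpos x hx.1)]
      exact hGle1 x hx
    have hG2 : IntegrableOn G (Set.Ioi R) := by
      apply Integrable.mono' hmaj2 (hGmeas.aestronglyMeasurable.restrict)
      filter_upwards [ae_restrict_mem measurableSet_Ioi] with x hx
      rw [Real.norm_eq_abs, abs_of_nonneg (hGpos x (hR.trans hx))]
      exact hGle2 x hx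
    have hGIoi : IntegrableOn G (Set.Ioi 0) := by
      rw [← Set.Ioc_union_Ioi_eq_Ioi hR.le]
      exact hG1.union hG2
    -- integrability of G ∘ |·| on ℝ
    have hgabs_Ioi : IntegrableOn (fun x : ℝ => G |x|) (Set.Ioi 0) :=
      hGIoi.congr_fun (fun x hx => by rw [abs_of_pos hx]) measurableSet_Ioi
    have hgabs_Iio : IntegrableOn (fun x : ℝ => G |x|) (Set.Iio 0) := by
      have h1 : Integrable
          (fun x : ℝ => Set.indicator (Set.Ioi (0:ℝ)) (fun y => G |y|) (-x)) volume :=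
        ((integrable_indicator_iff measurableSet_Ioi).mpr hgabs_Ioi).comp_neg
      have h2 : (fun x : ℝ => Set.indicator (Set.Ioi (0:ℝ)) (fun y => G |y|) (-x))
          = Set.indicator (Set.Iio (0:ℝ)) (fun y => G |y|) := by
        funext x
        by_cases hx : x < 0
        · rw [Set.indicator_of_mem (by simpa using hx : -x ∈ Set.Ioi (0:ℝ)),
            Set.indicator_of_mem (by simpa using hx : x ∈ Set.Iio (0:ℝ)), abs_neg]
        · rw [Set.indicator_of_notMem (by simpa using hx),
            Set.indicator_of_notMem (by simpa using hx)]
      rw [h2] at h1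
      exact (integrable_indicator_iff measurableSet_Iio).mp h1
    have hgabs : Integrable (fun x : ℝ => G |x|) volume := by
      rw [← integrableOn_univ, ← Set.Iio_union_Ici (a := (0:ℝ))]
      exact hgabs_Iio.union ((integrableOn_Ici_iff_integrableOn_Ioi enorm_ne_top).mpr hgabs_Ioi)
    -- pointwise bound: integrand ≤ G |ξ|
    have hfg : ∀ ξ : ℝ,
        |ξ| ^ (-(p * r + 1)) * ‖charFn φ ξ - charFn ψ ξ‖ ^ p ≤ G |ξ| := by
      intro ξ
      by_cases hξ : ξ = 0
      · subst hξ
        rw [abs_zero, Real.zero_rpow (by nlinarith : -(p * r + 1) ≠ 0), zero_mul,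
          hGdef]
        simp only
        rw [Real.zero_rpow (by nlinarith : -(p * r + 1) ≠ 0), mul_zero]
      · have hξ0 : (0:ℝ) < |ξ| := abs_pos.mpr hξ
        have h1 : ‖charFn φ ξ - charFn ψ ξ‖ ^ p ≤ min ((2:ℝ) ^ p) (d ^ p * |ξ| ^ (p * s)) := by
          apply le_min
          · exact Real.rpow_le_rpow (norm_nonneg _) (hΔ2 ξ) hp0.le
          · have h2 : ‖charFn φ ξ - charFn ψ ξ‖ ^ p ≤ (d * |ξ| ^ s) ^ p :=
              Real.rpow_le_rpow (norm_nonneg _) (hdle ξ hξ) hp0.le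
            calc ‖charFn φ ξ - charFn ψ ξ‖ ^ p ≤ (d * |ξ| ^ s) ^ p := h2
            _ = d ^ p * (|ξ| ^ s) ^ p := Real.mul_rpow hd0 (Real.rpow_nonneg (abs_nonneg _) _)
            _ = d ^ p * |ξ| ^ (s * p) := by rw [← Real.rpow_mul (abs_nonneg _)]
            _ = d ^ p * |ξ| ^ (p * s) := by rw [mul_comm s p]
        calc |ξ| ^ (-(p * r + 1)) * ‖charFn φ ξ - charFn ψ ξ‖ ^ p
            ≤ |ξ| ^ (-(p * r + 1)) * min ((2:ℝ) ^ p) (d ^ p * |ξ| ^ (p * s)) :=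
              mul_le_mul_of_nonneg_left h1 (Real.rpow_nonneg (abs_nonneg _) _)
        _ = G |ξ| := by rw [hGdef]; ring
    -- integral comparison
    have h_main : (∫ ξ : ℝ, |ξ| ^ (-(p * r + 1)) * ‖charFn φ ξ - charFn ψ ξ‖ ^ p)
        ≤ ∫ x : ℝ, G |x| :=
      integral_mono_of_nonneg (ae_of_all _ hfnonneg) hgabs (ae_of_all _ hfg)
    have h_comp : (∫ x : ℝ, G |x|) = 2 * ∫ x in Set.Ioi (0:ℝ), G x := integral_comp_abs
    have hsplit : (∫ x in Set.Ioi (0:ℝ), G x)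
        = (∫ x in Set.Ioc (0:ℝ) R, G x) + ∫ x in Set.Ioi R, G x := by
      rw [← Set.Ioc_union_Ioi_eq_Ioi hR.le]
      exact setIntegral_union (Set.Ioc_disjoint_Ioi le_rfl) measurableSet_Ioi hG1 hG2
    have hT1 : (∫ x in Set.Ioc (0:ℝ) R, G x)
        ≤ d ^ p * (R ^ (p * s - p * r) / (p * s - p * r)) := by
      have h1 : (∫ x in Set.Ioc (0:ℝ) R, G x)
          ≤ ∫ x in Set.Ioc (0:ℝ) R, d ^ p * x ^ (p * s - (p * r + 1)) :=
        setIntegral_mono_on hG1 hmaj1 measurableSet_Ioc hGle1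
      have h2 : (∫ x in Set.Ioc (0:ℝ) R, d ^ p * x ^ (p * s - (p * r + 1)))
          = d ^ p * (R ^ (p * s - p * r) / (p * s - p * r)) := by
        rw [integral_const_mul, ← intervalIntegral.integral_of_le hR.le,
          integral_rpow (Or.inl ha),
          show p * s - (p * r + 1) + 1 = p * s - p * r by ring,
          Real.zero_rpow (ne_of_gt hpsr), sub_zero]
      linarith [h1, h2.le, h2.ge]
    have hT2 : (∫ x in Set.Ioi R, G x) ≤ (2:ℝ) ^ p * (R ^ (-(p * r)) / (p * r)) := by
      have h1 : (∫ x in Set.Ioi R, G x)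
          ≤ ∫ x in Set.Ioi R, (2:ℝ) ^ p * x ^ (-(p * r + 1)) :=
        setIntegral_mono_on hG2 hmaj2 measurableSet_Ioi hGle2
      have h2 : (∫ x in Set.Ioi R, (2:ℝ) ^ p * x ^ (-(p * r + 1)))
          = (2:ℝ) ^ p * (R ^ (-(p * r)) / (p * r)) := by
        rw [integral_const_mul, integral_Ioi_rpow_of_lt hb hR]
        rw [show -(p * r + 1) + 1 = -(p * r) by ring, neg_div, div_neg, neg_neg]
      linarith [h1, h2.le]
    -- the total bound M
    set M : ℝ := 2 * (d ^ p * (R ^ (p * s - p * r) / (p * s - p * r))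
      + (2:ℝ) ^ p * (R ^ (-(p * r)) / (p * r))) with hMdef
    have hIM : (∫ ξ : ℝ, |ξ| ^ (-(p * r + 1)) * ‖charFn φ ξ - charFn ψ ξ‖ ^ p) ≤ M := by
      rw [hMdef]
      calc (∫ ξ : ℝ, |ξ| ^ (-(p * r + 1)) * ‖charFn φ ξ - charFn ψ ξ‖ ^ p)
          ≤ ∫ x : ℝ, G |x| := h_main
      _ = 2 * ((∫ x in Set.Ioc (0:ℝ) R, G x) + ∫ x in Set.Ioi R, G x) := by
          rw [h_comp, hsplit]
      _ ≤ _ := by nlinarith [hT1, hT2]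
    -- key algebraic identities
    set C : ℝ := 2 ^ (1 - r / s) * (2 * s / (p * r * (s - r))) ^ (1 / p) * d ^ (r / s)
      with hCdef
    have hKey : (2:ℝ) ^ p * R ^ (-(p * r)) = d ^ p * R ^ (p * s - p * r) := by
      have h2 : (2:ℝ) ^ p = d ^ p * R ^ (s * p) := by
        rw [← hRs, Real.mul_rpow hd0 (Real.rpow_nonneg hR.le _),
          ← Real.rpow_mul hR.le]
      rw [h2, mul_assoc, ← Real.rpow_add hR,
        show s * p + -(p * r) = p * s - p * r by ring]
    have hK2 : d ^ p * R ^ (p * s - p * r) = 2 ^ (p - p * r / s) * d ^ (p * r / s) := by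
      have h2d : (0:ℝ) < 2 / d := by positivity
      have e1 : R ^ (p * s - p * r) = (2 / d) ^ ((p * s - p * r) / s) := by
        rw [hRdef, ← Real.rpow_mul h2d.le,
          show s⁻¹ * (p * s - p * r) = (p * s - p * r) / s by ring]
      rw [e1, Real.div_rpow (by norm_num) hd0]
      rw [show (p * s - p * r) / s = p - p * r / s by field_simp]
      have hdd : d ^ p / d ^ (p - p * r / s) = d ^ (p * r / s) := by
        rw [← Real.rpow_sub hdpos, show p - (p - p * r / s) = p * r / s by ring]
      rw [mul_comm, div_mul_eq_mul_div, mul_div_assoc, hdd]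
    have hCppos : 0 < C := by
      rw [hCdef]
      have h1 : (0:ℝ) < 2 * s / (p * r * (s - r)) :=
        div_pos (by positivity) (mul_pos hpr hsr)
      exact mul_pos (mul_pos (Real.rpow_pos_of_pos two_pos _)
        (Real.rpow_pos_of_pos h1 _)) (Real.rpow_pos_of_pos hdpos _)
    have hMC : M = C ^ p := by
      have hCp : C ^ p = 2 ^ (p - p * r / s) * (2 * s / (p * r * (s - r))) * d ^ (p * r / s) := by
        have h1 : (0:ℝ) < 2 * s / (p * r * (s - r)) :=
          div_pos (by positivity) (mul_pos hpr hsr)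
        rw [hCdef, Real.mul_rpow (by positivity) (Real.rpow_nonneg hd0 _),
          Real.mul_rpow (by positivity) (Real.rpow_nonneg h1.le _),
          ← Real.rpow_mul (by norm_num : (0:ℝ) ≤ 2),
          ← Real.rpow_mul hd0,
          one_div, Real.rpow_inv_rpow h1.le hp0.ne',
          show (1 - r / s) * p = p - p * r / s by field_simp,
          show r / s * p = p * r / s by ring]
      have hne1 : p * s - p * r ≠ 0 := ne_of_gt hpsr
      have hne2 : p * r ≠ 0 := ne_of_gt hpr
      rw [hCp, hMdef,
        show (2:ℝ) ^ p * (R ^ (-(p * r)) / (p * r))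
          = 2 ^ p * R ^ (-(p * r)) / (p * r) by ring, hKey,
        show d ^ p * (R ^ (p * s - p * r) / (p * s - p * r))
          = d ^ p * R ^ (p * s - p * r) / (p * s - p * r) by ring, hK2]
      field_simp
      ring
    -- conclude
    rw [DFourierP]
    have hI0 : 0 ≤ ∫ ξ : ℝ, |ξ| ^ (-(p * r + 1)) * ‖charFn φ ξ - charFn ψ ξ‖ ^ p :=
      integral_nonneg hfnonneg
    calc (∫ ξ : ℝ, |ξ| ^ (-(p * r + 1)) * ‖charFn φ ξ - charFn ψ ξ‖ ^ p) ^ (1/p)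
        ≤ M ^ (1/p) := Real.rpow_le_rpow hI0 hIM (by positivity)
    _ = (C ^ p) ^ (1/p) := by rw [hMC]
    _ = C := by rw [one_div, Real.rpow_rpow_inv hCppos.le hp0.ne']
end

section
/- Let λ, σ > 0 and μ = 1 + 2λ/σ. Then for every v > 0, the steady state f∞ satisfies the first-order identity (σ/2)·(d/dv)(v² f∞(v)) + λ(v − 1) f∞(v) = 0; consequently f∞ is a stationary solution of the Fokker–Planck equation, i.e. (σ/2)·(d²/dv²)(v² f∞(v)) + λ·(d/dv)((v − 1) f∞(v)) = 0 for all v > 0. -/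
open MeasureTheory

/-- The steady state `f∞(v) = ((μ-1)^μ / Γ(μ)) e^{-(μ-1)/v} / v^{1+μ}` for `v > 0`,
extended by `0` for `v ≤ 0`. -/
noncomputable def fSt (μ : ℝ) (v : ℝ) : ℝ :=
  if 0 < v then (μ - 1) ^ μ / Real.Gamma μ * (Real.exp (-(μ - 1) / v) / v ^ (1 + μ))
  else 0

lemma fSt_eventuallyEq (μ v : ℝ) (hv : 0 < v) :
    fSt μ =ᶠ[nhds v] fun w =>
      (μ - 1) ^ μ / Real.Gamma μ * (Real.exp (-(μ - 1) / w) * w ^ (-(1 + μ))) := by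
  filter_upwards [isOpen_Ioi.mem_nhds hv] with w hw
  have hw' : (0:ℝ) < w := hw
  simp only [fSt, if_pos hw', Real.rpow_neg hw'.le, div_eq_mul_inv]

lemma fSt_hasDerivAt (μ v : ℝ) (hv : 0 < v) :
    HasDerivAt (fSt μ) (((μ - 1) / v ^ 2 - (1 + μ) / v) * fSt μ v) v := by
  set C : ℝ := (μ - 1) ^ μ / Real.Gamma μ with hC
  have h1 : HasDerivAt (fun w : ℝ => -(μ - 1) / w) ((μ - 1) / v ^ 2) v := by
    have h0 := (hasDerivAt_inv hv.ne').const_mul (-(μ - 1))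
    have hval : -(μ - 1) * -(v ^ 2)⁻¹ = (μ - 1) / v ^ 2 := by field_simp
    rw [hval] at h0
    simpa [div_eq_mul_inv] using h0
  have h2 := h1.exp
  have h3 : HasDerivAt (fun w : ℝ => w ^ (-(1 + μ))) (-(1 + μ) * v ^ (-(1 + μ) - 1)) v :=
    Real.hasDerivAt_rpow_const (Or.inl hv.ne')
  have h4 := (h2.mul h3).const_mul C
  refine (h4.congr_of_eventuallyEq (fSt_eventuallyEq μ v hv)).congr_deriv ?_
  have hfv : fSt μ v = C * (Real.exp (-(μ - 1) / v) / v ^ (1 + μ)) := by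
    simp [fSt, hv, hC]
  rw [hfv]
  have e1 : v ^ (-(1 + μ)) = (v ^ (1 + μ))⁻¹ := by
    rw [Real.rpow_neg hv.le]
  have e2 : v ^ (-(1 + μ) - 1) = (v ^ (1 + μ))⁻¹ * v⁻¹ := by
    rw [sub_eq_add_neg, Real.rpow_add hv, e1, Real.rpow_neg_one]
  rw [e1, e2]
  have hvp : (0:ℝ) < v ^ (1 + μ) := Real.rpow_pos_of_pos hv _
  field_simp
  ring

lemma sq_fSt_hasDerivAt (μ v : ℝ) (hv : 0 < v) :
    HasDerivAt (fun w => w ^ 2 * fSt μ w) ((μ - 1) * (1 - v) * fSt μ v) v := by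
  have h := (hasDerivAt_pow 2 v).mul (fSt_hasDerivAt μ v hv)
  refine h.congr_deriv ?_
  have hv2 : v ^ 2 ≠ 0 := pow_ne_zero _ hv.ne'
  field_simp
  ring

theorem stmt_3 (lam sig : ℝ) (hlam : 0 < lam) (hsig : 0 < sig)
    (μ : ℝ) (hmu : μ = 1 + 2 * lam / sig) :
    ∀ v : ℝ, 0 < v →
      (sig / 2 * deriv (fun w => w ^ 2 * fSt μ w) v + lam * (v - 1) * fSt μ v = 0) ∧
      (sig / 2 * deriv (deriv (fun w => w ^ 2 * fSt μ w)) v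
        + lam * deriv (fun w => (w - 1) * fSt μ w) v = 0) := by
  have hmu1 : μ - 1 = 2 * lam / sig := by rw [hmu]; ring
  have hkey : sig / 2 * (μ - 1) = lam := by
    rw [hmu1]; field_simp
  intro v hv
  have hD := fSt_hasDerivAt μ v hv
  set D : ℝ := ((μ - 1) / v ^ 2 - (1 + μ) / v) * fSt μ v with hDdef
  have hd1 : deriv (fun w => w ^ 2 * fSt μ w) v = (μ - 1) * (1 - v) * fSt μ v :=
    (sq_fSt_hasDerivAt μ v hv).deriv
  constructor
  · rw [hd1]
    have : sig / 2 * ((μ - 1) * (1 - v) * fSt μ v) = lam * (1 - v) * fSt μ v := by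
      rw [← hkey]; ring
    rw [this]; ring
  · -- second derivative
    have hEq : deriv (fun w => w ^ 2 * fSt μ w) =ᶠ[nhds v]
        fun w => (μ - 1) * (1 - w) * fSt μ w := by
      filter_upwards [isOpen_Ioi.mem_nhds hv] with w hw
      exact (sq_fSt_hasDerivAt μ w hw).deriv
    have h2 : deriv (deriv (fun w => w ^ 2 * fSt μ w)) v
        = deriv (fun w => (μ - 1) * (1 - w) * fSt μ w) v := hEq.deriv_eq
    have hlin : HasDerivAt (fun w : ℝ => (μ - 1) * (1 - w)) (-(μ - 1)) v := by
      have := ((hasDerivAt_id v).const_sub (1:ℝ)).const_mul (μ - 1)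
      simpa using this
    have h3 : HasDerivAt (fun w => (μ - 1) * (1 - w) * fSt μ w)
        (-(μ - 1) * fSt μ v + (μ - 1) * (1 - v) * D) v := hlin.mul hD
    have h4 : HasDerivAt (fun w : ℝ => (w - 1) * fSt μ w)
        (1 * fSt μ v + (v - 1) * D) v :=
      ((hasDerivAt_id v).sub_const (1:ℝ)).mul hD
    rw [h2, h3.deriv, h4.deriv]
    have hs : sig / 2 * (-(μ - 1) * fSt μ v + (μ - 1) * (1 - v) * D)
        = lam * (-(fSt μ v) + (1 - v) * D) := by
      rw [← hkey]; ring
    rw [hs]; ring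
end

section
/- Let λ, σ > 0 and μ = 1 + 2λ/σ. For every real r ≥ 0, the moment ∫_ℝ |v|^r f∞(v) dv is finite if and only if r < μ. -/
open MeasureTheory

lemma aux_meas (a s : ℝ) :
    AEStronglyMeasurable (fun v : ℝ => Real.exp (-a / v) * v ^ s)
      (volume.restrict (Set.Ioi (0:ℝ))) := by
  apply ContinuousOn.aestronglyMeasurable _ measurableSet_Ioi
  intro v hv
  have hv0 : v ≠ 0 := ne_of_gt hv
  exact ((Real.continuous_exp.continuousAt.comp
      (continuousAt_const.div continuousAt_id hv0)).mul
    (Real.continuousAt_rpow_const v s (Or.inl hv0))).continuousWithinAt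

lemma aux_key (a : ℝ) (ha : 0 < a) (s : ℝ) :
    IntegrableOn (fun v : ℝ => Real.exp (-a / v) * v ^ s) (Set.Ioi (0:ℝ)) ↔ s < -1 := by
  constructor
  · intro hint
    by_contra hs
    push_neg at hs
    -- compare on Ioi 1
    have h1 : IntegrableOn (fun v : ℝ => Real.exp (-a / v) * v ^ s) (Set.Ioi (1:ℝ)) :=
      hint.mono_set (Set.Ioi_subset_Ioi zero_le_one)
    have h2 : IntegrableOn (fun v : ℝ => Real.exp (-a) * v ^ s) (Set.Ioi (1:ℝ)) := by
      apply Integrable.mono' h1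
      · refine ContinuousOn.aestronglyMeasurable ?_ measurableSet_Ioi
        intro v hv
        have hv0 : v ≠ 0 := by have : (1:ℝ) < v := hv; linarith
        exact (continuousAt_const.mul
          (Real.continuousAt_rpow_const v s (Or.inl hv0))).continuousWithinAt
      · filter_upwards [ae_restrict_mem measurableSet_Ioi] with v hv
        have hv1 : (1:ℝ) < v := hv
        have hvpos : (0:ℝ) < v := lt_trans zero_lt_one hv1
        have hrp : (0:ℝ) ≤ v ^ s := Real.rpow_nonneg hvpos.le s
        rw [Real.norm_eq_abs, abs_of_nonneg (by positivity)]
        apply mul_le_mul_of_nonneg_right _ hrp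
        apply Real.exp_le_exp.2
        rw [neg_div]
        refine neg_le_neg ?_
        rw [div_le_iff₀ hvpos]
        nlinarith
    have h3 : IntegrableOn (fun v : ℝ => v ^ s) (Set.Ioi (1:ℝ)) := by
      have := h2.const_mul (Real.exp (-a))⁻¹
      simp [← mul_assoc, inv_mul_cancel₀ (Real.exp_ne_zero (-a))] at this
      exact this
    rw [integrableOn_Ioi_rpow_iff zero_lt_one] at h3
    linarith
  · intro hs
    have hsplit : Set.Ioi (0:ℝ) = Set.Ioc (0:ℝ) 1 ∪ Set.Ioi 1 := by
      rw [Set.Ioc_union_Ioi_eq_Ioi zero_le_one]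
    rw [hsplit]
    apply IntegrableOn.union
    · -- near 0: bound by n! / a^n * v^(n+s)
      obtain ⟨n, hn⟩ := exists_nat_gt (-1 - s)
      have hmeas := (aux_meas a s).restrict (s := Set.Ioc 0 1)
      refine Integrable.mono' (g := fun v => ((n.factorial : ℝ) / a ^ n) * v ^ ((n : ℝ) + s)) ?_ ?_ ?_
      · have : IntegrableOn (fun v : ℝ => v ^ ((n:ℝ) + s)) (Set.Ioc (0:ℝ) 1) := by
          rw [integrableOn_Ioc_iff_integrableOn_Ioo,
            intervalIntegral.integrableOn_Ioo_rpow_iff zero_lt_one]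
          linarith
        exact this.const_mul _
      · exact (aux_meas a s).mono_measure
          (Measure.restrict_mono (Set.Ioc_subset_Ioi_self) le_rfl)
      · filter_upwards [ae_restrict_mem measurableSet_Ioc] with v hv
        have hvpos : (0:ℝ) < v := hv.1
        have hrp : (0:ℝ) ≤ v ^ s := Real.rpow_nonneg hvpos.le s
        rw [Real.norm_eq_abs, abs_of_nonneg (by positivity)]
        have hb : Real.exp (-a / v) ≤ (n.factorial : ℝ) / a ^ n * v ^ (n:ℕ) := by
          have hx : (0:ℝ) ≤ a / v := by positivity
          have hexp : (a / v) ^ n / n.factorial ≤ Real.exp (a / v) :=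
            Real.pow_div_factorial_le_exp (x := a / v) hx n
          have h1 : (0:ℝ) < (a / v) ^ n / n.factorial := by positivity
          calc Real.exp (-a / v) = (Real.exp (a / v))⁻¹ := by
                rw [neg_div, Real.exp_neg]
            _ ≤ ((a / v) ^ n / n.factorial)⁻¹ := by gcongr
            _ = (n.factorial : ℝ) / a ^ n * v ^ (n:ℕ) := by
                rw [div_pow]
                field_simp
        calc Real.exp (-a / v) * v ^ s
            ≤ ((n.factorial : ℝ) / a ^ n * v ^ (n:ℕ)) * v ^ s :=
              mul_le_mul_of_nonneg_right hb hrp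
          _ = (n.factorial : ℝ) / a ^ n * v ^ ((n:ℝ) + s) := by
              rw [mul_assoc, ← Real.rpow_natCast v n, ← Real.rpow_add hvpos]
    · -- near ∞: bound by v^s
      refine Integrable.mono' (g := fun v => v ^ s) ?_ ?_ ?_
      · exact (integrableOn_Ioi_rpow_iff zero_lt_one).2 hs
      · exact (aux_meas a s).mono_measure
          (Measure.restrict_mono (Set.Ioi_subset_Ioi zero_le_one) le_rfl)
      · filter_upwards [ae_restrict_mem measurableSet_Ioi] with v hv
        have hvpos : (0:ℝ) < v := lt_trans zero_lt_one hv
        have hrp : (0:ℝ) ≤ v ^ s := Real.rpow_nonneg hvpos.le s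
        rw [Real.norm_eq_abs, abs_of_nonneg (by positivity)]
        have hle : -a / v ≤ 0 :=
          div_nonpos_of_nonpos_of_nonneg (by linarith) hvpos.le
        nlinarith [Real.exp_le_one_iff.2 hle, Real.exp_pos (-a/v)]

theorem stmt_5 (lam sig : ℝ) (hlam : 0 < lam) (hsig : 0 < sig)
    (μ : ℝ) (hmu : μ = 1 + 2 * lam / sig) :
    ∀ r : ℝ, 0 ≤ r →
      (Integrable (fun v : ℝ => |v| ^ r * fSt μ v) ↔ r < μ) := by
  intro r hr
  have hmu1 : 1 < μ := by
    rw [hmu]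
    have h0 : 0 < 2 * lam / sig := by positivity
    linarith
  set a := μ - 1 with ha_def
  have ha : 0 < a := sub_pos.mpr hmu1
  set C := (μ - 1) ^ μ / Real.Gamma μ with hC_def
  have hC : 0 < C := by
    apply div_pos (Real.rpow_pos_of_pos ha μ) (Real.Gamma_pos_of_pos (by linarith))
  have hsupp : Function.support (fun v : ℝ => |v| ^ r * fSt μ v) ⊆ Set.Ioi 0 := by
    intro v hv
    simp only [Function.mem_support] at hv
    by_contra h
    simp only [Set.mem_Ioi, not_lt] at h
    apply hv
    rw [fSt, if_neg (not_lt.2 h), mul_zero]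
  have hEq : Set.EqOn (fun v : ℝ => |v| ^ r * fSt μ v)
      (fun v : ℝ => C * (Real.exp (-a / v) * v ^ (r - (1 + μ)))) (Set.Ioi 0) := by
    intro v hv
    have hvpos : (0:ℝ) < v := hv
    simp only [fSt, if_pos hvpos, abs_of_pos hvpos]
    rw [Real.rpow_sub hvpos]
    ring
  rw [← integrableOn_iff_integrable_of_support_subset hsupp]
  have key := aux_key a ha (r - (1 + μ))
  constructor
  · intro h
    have h2 : IntegrableOn (fun v : ℝ => C * (Real.exp (-a / v) * v ^ (r - (1 + μ))))
        (Set.Ioi 0) := IntegrableOn.congr_fun h hEq measurableSet_Ioi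
    have h3 : IntegrableOn (fun v : ℝ => Real.exp (-a / v) * v ^ (r - (1 + μ)))
        (Set.Ioi (0:ℝ)) := by
      have := h2.const_mul C⁻¹
      simp [← mul_assoc, inv_mul_cancel₀ hC.ne'] at this
      exact this
    have := key.1 h3
    linarith
  · intro h
    have h3 : IntegrableOn (fun v : ℝ => Real.exp (-a / v) * v ^ (r - (1 + μ)))
        (Set.Ioi (0:ℝ)) := key.2 (by linarith)
    exact IntegrableOn.congr_fun (h3.const_mul C) hEq.symm measurableSet_Ioi
end

section
/- Let f∞ and g be probability densities on ℝ such that g(v) > 0 at almost every point where f∞(v) > 0, and define h(v) = f∞(v)²/g(v) at points where g(v) > 0 and h(v) = 0 elsewhere. Assume h is integrable. Then d_H(h, f∞) ≥ (1/4) ∫_ℝ |g(v) − f∞(v)| dv ≥ (1/4) d_H(g, f∞)², where d_H(p,q) = ( ∫_ℝ (√p(v) − √q(v))² dv )^{1/2}. -/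
open MeasureTheory

private lemma ptwise_16 (a b s : ℝ) (ha : 0 ≤ a) (hb : 0 ≤ b) (hs : 0 < s)
    (hab : b = 0 → a = 0) :
    max (a - b) 0 ≤ s * b + (Real.sqrt (a ^ 2 / b) - Real.sqrt a) ^ 2 / s := by
  rcases eq_or_lt_of_le hb with hb0 | hb0
  · have ha0 : a = 0 := hab hb0.symm
    subst ha0
    rw [← hb0]
    norm_num
  · have hsb : 0 < Real.sqrt b := Real.sqrt_pos.mpr hb0
    set X := Real.sqrt (a ^ 2 / b) - Real.sqrt a with hXdef
    have hsqrt : Real.sqrt (a ^ 2 / b) = a / Real.sqrt b := by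
      rw [Real.sqrt_div (sq_nonneg a), Real.sqrt_sq ha]
    have hX : Real.sqrt b * X = a - Real.sqrt a * Real.sqrt b := by
      rw [hXdef, hsqrt]
      field_simp
    have key1 : a - b ≤ 2 * (Real.sqrt b * X) := by
      rw [hX]
      nlinarith [sq_nonneg (Real.sqrt a - Real.sqrt b), Real.sq_sqrt ha, Real.sq_sqrt hb]
    have key2 : 2 * s * (Real.sqrt b * X) ≤ s ^ 2 * b + X ^ 2 := by
      nlinarith [sq_nonneg (s * Real.sqrt b - X), Real.sq_sqrt hb]
    have key3 : a - b ≤ s * b + X ^ 2 / s := by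
      have h4 : s * (s * b + X ^ 2 / s) = s ^ 2 * b + X ^ 2 := by
        field_simp
      have h5 : s * (a - b) ≤ s * (s * b + X ^ 2 / s) := by
        rw [h4]
        nlinarith [mul_le_mul_of_nonneg_left key1 hs.le]
      exact le_of_mul_le_mul_left h5 hs
    have key0 : 0 ≤ s * b + X ^ 2 / s := by positivity
    exact max_le key3 key0

theorem stmt_16 (fInf g : ℝ → ℝ) (hfIm : Measurable fInf) (hgm : Measurable g)
    (hfI0 : ∀ v, 0 ≤ fInf v) (hg0 : ∀ v, 0 ≤ g v)
    (hfIi : Integrable fInf) (hgi : Integrable g)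
    (hfI1 : (∫ v, fInf v) = 1) (hg1 : (∫ v, g v) = 1)
    (hpos : ∀ᵐ v : ℝ, 0 < fInf v → 0 < g v)
    -- `h v = fInf v ^ 2 / g v`; note that in Lean division by zero gives `0`,
    -- so `h v = 0` whenever `g v = 0`
    (hh : Integrable fun v => fInf v ^ 2 / g v) :
    1 / 4 * (∫ v, |g v - fInf v|) ≤
        Real.sqrt (∫ v, (Real.sqrt (fInf v ^ 2 / g v) - Real.sqrt (fInf v)) ^ 2) ∧
      1 / 4 * (∫ v, (Real.sqrt (g v) - Real.sqrt (fInf v)) ^ 2) ≤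
        1 / 4 * ∫ v, |g v - fInf v| := by
  set c : ℝ := ∫ v, |g v - fInf v| with hc
  set S : ℝ → ℝ := fun v => (Real.sqrt (fInf v ^ 2 / g v) - Real.sqrt (fInf v)) ^ 2 with hSdef
  set E : ℝ := ∫ v, S v with hE
  set φ : ℝ → ℝ := fun v => max (fInf v - g v) 0 with hφdef
  set ψ : ℝ → ℝ := fun v => max (g v - fInf v) 0 with hψdef
  have hφi : Integrable φ := (hfIi.sub hgi).pos_part
  have hψi : Integrable ψ := (hgi.sub hfIi).pos_part
  -- ∫ φ = c / 2
  have hφsub : (fun v => φ v - ψ v) = fun v => fInf v - g v := by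
    funext v
    rcases le_total (fInf v) (g v) with h | h
    · rw [hφdef, hψdef]
      simp only
      rw [max_eq_right (by linarith), max_eq_left (by linarith)]
      ring
    · rw [hφdef, hψdef]
      simp only
      rw [max_eq_left (by linarith), max_eq_right (by linarith)]
      ring
  have hφadd : (fun v => φ v + ψ v) = fun v => |g v - fInf v| := by
    funext v
    rcases le_total (fInf v) (g v) with h | h
    · rw [hφdef, hψdef]
      simp only
      rw [max_eq_right (by linarith), max_eq_left (by linarith),
        abs_of_nonneg (by linarith)]
      ring
    · rw [hφdef, hψdef]
      simp only
      rw [max_eq_left (by linarith), max_eq_right (by linarith),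
        abs_of_nonpos (by linarith)]
      ring
  have hd : (∫ v, φ v) - (∫ v, ψ v) = 0 := by
    rw [← integral_sub hφi hψi]
    have : (∫ v, (φ v - ψ v)) = ∫ v, (fInf v - g v) := by rw [hφsub]
    rw [this, integral_sub hfIi hgi, hfI1, hg1]
    ring
  have ha : (∫ v, φ v) + (∫ v, ψ v) = c := by
    rw [← integral_add hφi hψi]
    rw [hc]
    congr 1
  have hφint : (∫ v, φ v) = c / 2 := by linarith
  -- integrability of S
  have hXm : Measurable fun v => Real.sqrt (fInf v ^ 2 / g v) - Real.sqrt (fInf v) :=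
    (((hfIm.pow_const 2).div hgm).sqrt).sub hfIm.sqrt
  have hSm : Measurable S := hXm.pow_const 2
  have hSi : Integrable S := by
    have hbound : Integrable (fun v => 2 * (fInf v ^ 2 / g v) + 2 * fInf v) :=
      (hh.const_mul 2).add (hfIi.const_mul 2)
    refine hbound.mono' hSm.aestronglyMeasurable (ae_of_all _ fun v => ?_)
    rw [Real.norm_eq_abs, abs_of_nonneg (sq_nonneg _)]
    simp only [hSdef]
    have h1 : 0 ≤ fInf v ^ 2 / g v := div_nonneg (sq_nonneg _) (hg0 v)
    nlinarith [Real.sq_sqrt h1, Real.sq_sqrt (hfI0 v), sq_nonneg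
      (Real.sqrt (fInf v ^ 2 / g v) + Real.sqrt (fInf v))]
  have hE0 : 0 ≤ E := integral_nonneg fun v => sq_nonneg _
  -- key inequality
  have key : ∀ s : ℝ, 0 < s → c / 2 ≤ s + E / s := by
    intro s hs
    have h1 : (∫ v, φ v) ≤ ∫ v, (s * g v + S v / s) := by
      refine integral_mono_ae hφi ((hgi.const_mul s).add (hSi.div_const s)) ?_
      filter_upwards [hpos] with v hv
      exact ptwise_16 (fInf v) (g v) s (hfI0 v) (hg0 v) hs
        (fun hb => by
          by_contra hne
          exact absurd hb (ne_of_gt (hv (lt_of_le_of_ne (hfI0 v) (Ne.symm hne)))))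
    have h2 : (∫ v, (s * g v + S v / s)) = s + E / s := by
      rw [integral_add (hgi.const_mul s) (hSi.div_const s), integral_const_mul,
        integral_div, hg1, ← hE]
      ring
    rw [hφint, h2] at h1
    exact h1
  constructor
  · -- first inequality
    show 1 / 4 * c ≤ Real.sqrt E
    rcases le_or_gt c 0 with hcle | hcpos
    · calc 1 / 4 * c ≤ 0 := by linarith
        _ ≤ Real.sqrt E := Real.sqrt_nonneg _
    · rcases eq_or_lt_of_le hE0 with hEz | hEpos
      · exfalso
        have := key (c / 8) (by linarith)
        rw [← hEz, zero_div] at this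
        linarith
      · have hsE : 0 < Real.sqrt E := Real.sqrt_pos.mpr hEpos
        have := key (Real.sqrt E) hsE
        rw [Real.div_sqrt] at this
        linarith
  · -- second inequality
    have hpt : ∀ v, (Real.sqrt (g v) - Real.sqrt (fInf v)) ^ 2 ≤ |g v - fInf v| := by
      intro v
      have h1 := Real.sq_sqrt (hg0 v)
      have h2 := Real.sq_sqrt (hfI0 v)
      have h3 := Real.sqrt_nonneg (g v)
      have h4 := Real.sqrt_nonneg (fInf v)
      rcases abs_cases (g v - fInf v) with ⟨he, hge⟩ | ⟨he, hge⟩ <;> rw [he]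
      · have hle : Real.sqrt (fInf v) ≤ Real.sqrt (g v) :=
          Real.sqrt_le_sqrt (by linarith)
        nlinarith [mul_nonneg h4 (sub_nonneg.mpr hle)]
      · have hle : Real.sqrt (g v) ≤ Real.sqrt (fInf v) :=
          Real.sqrt_le_sqrt (by linarith)
        nlinarith [mul_nonneg h3 (sub_nonneg.mpr hle)]
    have hsqi : Integrable (fun v => (Real.sqrt (g v) - Real.sqrt (fInf v)) ^ 2) := by
      refine (hgi.sub hfIi).abs.mono'
        ((hgm.sqrt.sub hfIm.sqrt).pow_const 2).aestronglyMeasurable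
        (ae_of_all _ fun v => ?_)
      rw [Real.norm_eq_abs, abs_of_nonneg (sq_nonneg _)]
      exact hpt v
    have := integral_mono hsqi (hgi.sub hfIi).abs hpt
    exact mul_le_mul_of_nonneg_left this (by norm_num)
end

section
/- Let 0 < α < 1, and let f and g be probability densities on ℝ. Then (1−α) ∫_ℝ |f(v) − g(v)| dv ≤ 2 · d_{H,α}(f,g), where d_{H,α}(f,g) = d_H(f, α f + (1−α) g) and d_H(p,q) = ( ∫_ℝ (√p(v) − √q(v))² dv )^{1/2}. -/
open MeasureTheory

theorem stmt_17 (α : ℝ) (hα0 : 0 < α) (hα1 : α < 1)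
    (f g : ℝ → ℝ) (hfm : Measurable f) (hgm : Measurable g)
    (hf0 : ∀ v, 0 ≤ f v) (hg0 : ∀ v, 0 ≤ g v)
    (hfi : Integrable f) (hgi : Integrable g)
    (hf1 : (∫ v, f v) = 1) (hg1 : (∫ v, g v) = 1) :
    (1 - α) * (∫ v, |f v - g v|) ≤
      2 * Real.sqrt
        (∫ v, (Real.sqrt (f v) - Real.sqrt (α * f v + (1 - α) * g v)) ^ 2) := by
  set q : ℝ → ℝ := fun v => α * f v + (1 - α) * g v with hq_def
  have hα1' : (0:ℝ) ≤ 1 - α := by linarith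
  have hq0 : ∀ v, 0 ≤ q v := fun v =>
    add_nonneg (mul_nonneg hα0.le (hf0 v)) (mul_nonneg hα1' (hg0 v))
  have hqm : Measurable q := (hfm.const_mul α).add (hgm.const_mul (1 - α))
  have hqi : Integrable q := (hfi.const_mul α).add (hgi.const_mul (1 - α))
  have hq1 : (∫ v, q v) = 1 := by
    simp only [hq_def]
    rw [integral_add (hfi.const_mul α) (hgi.const_mul (1 - α)),
      integral_const_mul, integral_const_mul, hf1, hg1]
    ring
  set u : ℝ → ℝ := fun v => Real.sqrt (f v) - Real.sqrt (q v) with hu_def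
  set w : ℝ → ℝ := fun v => Real.sqrt (f v) + Real.sqrt (q v) with hw_def
  have hum : Measurable u := hfm.sqrt.sub hqm.sqrt
  have hwm : Measurable w := hfm.sqrt.add hqm.sqrt
  have hw0 : ∀ v, 0 ≤ w v := fun v => add_nonneg (Real.sqrt_nonneg _) (Real.sqrt_nonneg _)
  -- s = √f √q
  set s : ℝ → ℝ := fun v => Real.sqrt (f v) * Real.sqrt (q v) with hs_def
  have hs0 : ∀ v, 0 ≤ s v := fun v => mul_nonneg (Real.sqrt_nonneg _) (Real.sqrt_nonneg _)
  have hsle : ∀ v, s v ≤ (f v + q v) / 2 := by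
    intro v
    clear_value q u w s
    simp only [hs_def]
    nlinarith [sq_nonneg (Real.sqrt (f v) - Real.sqrt (q v)),
      Real.sq_sqrt (hf0 v), Real.sq_sqrt (hq0 v)]
  have hsi : Integrable s := by
    refine Integrable.mono ((hfi.add hqi).div_const 2) (hfm.sqrt.mul hqm.sqrt).aestronglyMeasurable ?_
    filter_upwards with v
    simp only [Pi.add_apply]
    rw [Real.norm_of_nonneg (hs0 v), Real.norm_of_nonneg
      (by have := hf0 v; have := hq0 v; positivity : (0:ℝ) ≤ (f v + q v) / 2)]
    exact hsle v
  have hw2 : ∀ v, w v ^ 2 = f v + q v + 2 * s v := by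
    intro v
    clear_value q u w s
    simp only [hw_def, hs_def]
    nlinarith [Real.sq_sqrt (hf0 v), Real.sq_sqrt (hq0 v)]
  have hu2 : ∀ v, u v ^ 2 = f v + q v - 2 * s v := by
    intro v
    clear_value q u w s
    simp only [hu_def, hs_def]
    nlinarith [Real.sq_sqrt (hf0 v), Real.sq_sqrt (hq0 v)]
  have hw2i : Integrable (fun v => w v ^ 2) := by
    have : Integrable (fun v => f v + q v + 2 * s v) := (hfi.add hqi).add (hsi.const_mul 2)
    exact this.congr (by filter_upwards with v using (hw2 v).symm)
  have hu2i : Integrable (fun v => u v ^ 2) := by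
    have : Integrable (fun v => f v + q v - 2 * s v) := (hfi.add hqi).sub (hsi.const_mul 2)
    exact this.congr (by filter_upwards with v using (hu2 v).symm)
  -- Memℒp
  have h2e : ENNReal.ofReal (2:ℝ) = 2 := by norm_num
  have huL2 : MemLp (fun v => |u v|) (ENNReal.ofReal (2:ℝ)) (volume : Measure ℝ) := by
    rw [h2e, memLp_two_iff_integrable_sq hum.abs.aestronglyMeasurable]
    exact hu2i.congr (by filter_upwards with v using (sq_abs (u v)).symm)
  have hwL2 : MemLp w (ENNReal.ofReal (2:ℝ)) (volume : Measure ℝ) := by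
    rw [h2e, memLp_two_iff_integrable_sq hwm.aestronglyMeasurable]
    exact hw2i
  -- Cauchy-Schwarz
  have hCS := integral_mul_le_Lp_mul_Lq_of_nonneg (p := 2) (q := 2)
    ⟨by norm_num, by norm_num, by norm_num⟩
    (Filter.Eventually.of_forall fun v => abs_nonneg (u v))
    (Filter.Eventually.of_forall hw0)
    huL2 hwL2
  -- pointwise: |f - q| = |u| * w
  have hpt : ∀ v, |u v| * w v = (1 - α) * |f v - g v| := by
    intro v
    have h1 : u v * w v = f v - q v := by
      clear_value q u w s
      simp only [hu_def, hw_def]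
      nlinarith [Real.sq_sqrt (hf0 v), Real.sq_sqrt (hq0 v)]
    have h2 : f v - q v = (1 - α) * (f v - g v) := by simp only [hq_def]; ring
    have : |u v * w v| = |(1 - α) * (f v - g v)| := by rw [h1, h2]
    rw [abs_mul, abs_mul, abs_of_nonneg (hw0 v), abs_of_nonneg hα1'] at this
    exact this
  have hInt1 : (∫ v, |u v| * w v) = (1 - α) * (∫ v, |f v - g v|) := by
    rw [← integral_const_mul]
    exact integral_congr_ae (Filter.Eventually.of_forall hpt)
  -- bound on ∫ w^2
  have hsint : (∫ v, s v) ≤ 1 := by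
    have : (∫ v, s v) ≤ ∫ v, (f v + q v) / 2 :=
      integral_mono hsi ((hfi.add hqi).div_const 2) hsle
    rw [integral_div, integral_add hfi hqi, hf1, hq1] at this
    linarith
  have hw2int : (∫ v, w v ^ 2) ≤ 4 := by
    have h : (∫ v, w v ^ 2) = (∫ v, f v) + (∫ v, q v) + 2 * ∫ v, s v := by
      rw [integral_congr_ae (Filter.Eventually.of_forall hw2),
        integral_add (show Integrable (fun v => f v + q v) volume from hfi.add hqi)
          (hsi.const_mul 2), integral_add hfi hqi, integral_const_mul]
    rw [h, hf1, hq1]; linarith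
  have hu2nonneg : (0:ℝ) ≤ ∫ v, u v ^ 2 := integral_nonneg fun v => sq_nonneg _
  have hw2nonneg : (0:ℝ) ≤ ∫ v, w v ^ 2 := integral_nonneg fun v => sq_nonneg _
  -- convert rpow to sqrt
  have hCS' : (1 - α) * (∫ v, |f v - g v|) ≤
      Real.sqrt (∫ v, u v ^ 2) * Real.sqrt (∫ v, w v ^ 2) := by
    rw [← hInt1]
    calc (∫ v, |u v| * w v)
        ≤ (∫ v, |u v| ^ (2:ℝ)) ^ ((1:ℝ)/2) * (∫ v, w v ^ (2:ℝ)) ^ ((1:ℝ)/2) := hCS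
      _ = Real.sqrt (∫ v, u v ^ 2) * Real.sqrt (∫ v, w v ^ 2) := by
          have e1 : (∫ v, |u v| ^ (2:ℝ)) = ∫ v, u v ^ 2 := by
            apply integral_congr_ae; filter_upwards with v
            rw [(by norm_num : ((2:ℝ)) = ((2:ℕ):ℝ)), Real.rpow_natCast]
            exact sq_abs _
          have e2 : (∫ v, w v ^ (2:ℝ)) = ∫ v, w v ^ 2 := by
            apply integral_congr_ae; filter_upwards with v
            rw [(by norm_num : ((2:ℝ)) = ((2:ℕ):ℝ)), Real.rpow_natCast]
          rw [e1, e2, ← Real.sqrt_eq_rpow, ← Real.sqrt_eq_rpow]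
  have hwsqrt : Real.sqrt (∫ v, w v ^ 2) ≤ 2 := by
    have : Real.sqrt (∫ v, w v ^ 2) ≤ Real.sqrt 4 := Real.sqrt_le_sqrt hw2int
    simpa [Real.sqrt_eq_iff_eq_sq, show Real.sqrt 4 = 2 by
      rw [show (4:ℝ) = 2^2 by norm_num, Real.sqrt_sq (by norm_num)]] using this
  calc (1 - α) * (∫ v, |f v - g v|)
      ≤ Real.sqrt (∫ v, u v ^ 2) * Real.sqrt (∫ v, w v ^ 2) := hCS'
    _ ≤ Real.sqrt (∫ v, u v ^ 2) * 2 :=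
        mul_le_mul_of_nonneg_left hwsqrt (Real.sqrt_nonneg _)
    _ = 2 * Real.sqrt (∫ v, u v ^ 2) := mul_comm _ _
end

section
/- Let 0 < α < 1, and let f, f∞ : (0,∞) → (0,∞) be differentiable functions. Set g = α f + (1−α) f∞ on (0,∞). Then for every v > 0, f(v) · ( f'(v)/f(v) − g'(v)/g(v) )² ≥ 4 ((1−α)²/α) · f∞(v) · ( (d/dv) √(f∞/g) (v) )². In particular, multiplying by v² and integrating, ∫_0^∞ v² f(v) ( (d/dv) log(f/g)(v) )² dv ≥ 4 ((1−α)²/α) ∫_0^∞ v² f∞(v) ( (d/dv) √(f∞/g)(v) )² dv. -/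
open MeasureTheory

lemma key_ineq (α a b a' b' : ℝ) (hα0 : 0 < α) (hα1 : α < 1) (ha : 0 < a) (hb : 0 < b) :
    4 * ((1 - α) ^ 2 / α) * b *
      (((b' * (α * a + (1 - α) * b) - b * (α * a' + (1 - α) * b')) / (α * a + (1 - α) * b) ^ 2) /
        (2 * Real.sqrt (b / (α * a + (1 - α) * b)))) ^ 2 ≤
    a * (a' / a - (α * a' + (1 - α) * b') / (α * a + (1 - α) * b)) ^ 2 := by
  set g := α * a + (1 - α) * b with hg
  have hgpos : 0 < g := by nlinarith
  have hq : 0 < b / g := div_pos hb hgpos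
  have hs : Real.sqrt (b / g) ^ 2 = b / g := Real.sq_sqrt hq.le
  have hsp : 0 < Real.sqrt (b / g) := Real.sqrt_pos.2 hq
  have hD : b' * g - b * (α * a' + (1 - α) * b') = α * (b' * a - b * a') := by
    rw [hg]; ring
  have hN : a' / a - (α * a' + (1 - α) * b') / g
      = (1 - α) * (a' * b - a * b') / (a * g) := by
    field_simp
    ring
  rw [hD, hN, div_pow, div_pow, div_pow, mul_pow 2, hs]
  have key : 4 * ((1 - α) ^ 2 / α) * b * ((α * (b' * a - b * a')) ^ 2 / (g ^ 2) ^ 2 / (2 ^ 2 * (b / g)))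
      = (1 - α) ^ 2 * α * (a' * b - a * b') ^ 2 / g ^ 3 := by
    field_simp
    ring
  have key2 : a * (((1 - α) * (a' * b - a * b')) ^ 2 / (a * g) ^ 2)
      = (1 - α) ^ 2 * (a' * b - a * b') ^ 2 / (a * g ^ 2) := by
    field_simp
  rw [key, key2]
  rw [div_le_div_iff₀ (by positivity) (by positivity)]
  have hag : α * a ≤ g := by nlinarith
  nlinarith [sq_nonneg (a' * b - a * b'), mul_pos ha hgpos, sq_nonneg ((a'*b-a*b')*g),
    mul_nonneg (mul_nonneg (sq_nonneg (1-α)) (sq_nonneg (a'*b-a*b'))) (mul_nonneg (sq_nonneg g) (sub_nonneg.2 hag))]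

theorem stmt_19 (α : ℝ) (hα0 : 0 < α) (hα1 : α < 1)
    (f fInf : ℝ → ℝ)
    (hfpos : ∀ v ∈ Set.Ioi (0 : ℝ), 0 < f v)
    (hfIpos : ∀ v ∈ Set.Ioi (0 : ℝ), 0 < fInf v)
    (hfd : ∀ v ∈ Set.Ioi (0 : ℝ), DifferentiableAt ℝ f v)
    (hfId : ∀ v ∈ Set.Ioi (0 : ℝ), DifferentiableAt ℝ fInf v) :
    -- with `g = α f + (1-α) f∞`,
    -- pointwise inequality on `(0, ∞)`:
    (∀ v ∈ Set.Ioi (0 : ℝ),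
      4 * ((1 - α) ^ 2 / α) * fInf v *
          (deriv (fun x => Real.sqrt (fInf x / (α * f x + (1 - α) * fInf x))) v) ^ 2 ≤
        f v * (deriv f v / f v -
          deriv (fun x => α * f x + (1 - α) * fInf x) v /
            (α * f v + (1 - α) * fInf v)) ^ 2) ∧
    -- integrated inequality (multiplying by `v²` and integrating over `(0, ∞)`):
    (∫⁻ v in Set.Ioi (0 : ℝ), ENNReal.ofReal
        (4 * ((1 - α) ^ 2 / α) * (v ^ 2 * fInf v *
          (deriv (fun x => Real.sqrt (fInf x / (α * f x + (1 - α) * fInf x))) v) ^ 2))) ≤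
      ∫⁻ v in Set.Ioi (0 : ℝ), ENNReal.ofReal
        (v ^ 2 * f v *
          (deriv (fun x => Real.log (f x / (α * f x + (1 - α) * fInf x))) v) ^ 2) := by
  -- basic facts at a point v > 0
  have main : ∀ v ∈ Set.Ioi (0 : ℝ),
      4 * ((1 - α) ^ 2 / α) * fInf v *
          (deriv (fun x => Real.sqrt (fInf x / (α * f x + (1 - α) * fInf x))) v) ^ 2 ≤
        f v * (deriv f v / f v -
          deriv (fun x => α * f x + (1 - α) * fInf x) v /
            (α * f v + (1 - α) * fInf v)) ^ 2 := by
    intro v hv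
    have hfv := hfpos v hv
    have hfIv := hfIpos v hv
    have hfdv := hfd v hv
    have hfIdv := hfId v hv
    have hgpos : 0 < α * f v + (1 - α) * fInf v := by nlinarith
    have hgd : DifferentiableAt ℝ (fun x => α * f x + (1 - α) * fInf x) v :=
      (hfdv.const_mul α).add (hfIdv.const_mul (1 - α))
    have hgderiv : deriv (fun x => α * f x + (1 - α) * fInf x) v
        = α * deriv f v + (1 - α) * deriv fInf v := by
      rw [deriv_fun_add (hfdv.const_mul α) (hfIdv.const_mul (1 - α)),
        deriv_const_mul α hfdv, deriv_const_mul (1 - α) hfIdv]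
    have hqd : DifferentiableAt ℝ (fun x => fInf x / (α * f x + (1 - α) * fInf x)) v :=
      hfIdv.div hgd hgpos.ne'
    have hqderiv : deriv (fun x => fInf x / (α * f x + (1 - α) * fInf x)) v
        = (deriv fInf v * (α * f v + (1 - α) * fInf v)
            - fInf v * (α * deriv f v + (1 - α) * deriv fInf v))
          / (α * f v + (1 - α) * fInf v) ^ 2 := by
      rw [deriv_fun_div hfIdv hgd hgpos.ne', hgderiv]
    have hsderiv : deriv (fun x => Real.sqrt (fInf x / (α * f x + (1 - α) * fInf x))) v
        = ((deriv fInf v * (α * f v + (1 - α) * fInf v)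
            - fInf v * (α * deriv f v + (1 - α) * deriv fInf v))
          / (α * f v + (1 - α) * fInf v) ^ 2)
          / (2 * Real.sqrt (fInf v / (α * f v + (1 - α) * fInf v))) := by
      rw [deriv_sqrt hqd (by positivity), hqderiv]
    rw [hsderiv, hgderiv]
    exact key_ineq α (f v) (fInf v) (deriv f v) (deriv fInf v) hα0 hα1 hfv hfIv
  refine ⟨main, ?_⟩
  refine lintegral_mono_ae ((ae_restrict_iff' measurableSet_Ioi).2 (ae_of_all _ ?_))
  intro v hv
  apply ENNReal.ofReal_le_ofReal
  have hfv := hfpos v hv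
  have hfIv := hfIpos v hv
  have hfdv := hfd v hv
  have hfIdv := hfId v hv
  have hgpos : 0 < α * f v + (1 - α) * fInf v := by nlinarith
  have hgd : DifferentiableAt ℝ (fun x => α * f x + (1 - α) * fInf x) v :=
    (hfdv.const_mul α).add (hfIdv.const_mul (1 - α))
  have hld : DifferentiableAt ℝ (fun x => f x / (α * f x + (1 - α) * fInf x)) v :=
    hfdv.div hgd hgpos.ne'
  have hlog : deriv (fun x => Real.log (f x / (α * f x + (1 - α) * fInf x))) v
      = deriv f v / f v -
        deriv (fun x => α * f x + (1 - α) * fInf x) v / (α * f v + (1 - α) * fInf v) := by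
    rw [deriv.log hld (by positivity), deriv_fun_div hfdv hgd hgpos.ne']
    field_simp
  rw [hlog]
  have h := main v hv
  have hv0 : (0:ℝ) < v := hv
  calc 4 * ((1 - α) ^ 2 / α) * (v ^ 2 * fInf v *
          (deriv (fun x => Real.sqrt (fInf x / (α * f x + (1 - α) * fInf x))) v) ^ 2)
      = v ^ 2 * (4 * ((1 - α) ^ 2 / α) * fInf v *
          (deriv (fun x => Real.sqrt (fInf x / (α * f x + (1 - α) * fInf x))) v) ^ 2) := by ring
    _ ≤ v ^ 2 * (f v * (deriv f v / f v -
          deriv (fun x => α * f x + (1 - α) * fInf x) v /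
            (α * f v + (1 - α) * fInf v)) ^ 2) := by
        exact mul_le_mul_of_nonneg_left h (by positivity)
    _ = v ^ 2 * f v * (deriv f v / f v -
          deriv (fun x => α * f x + (1 - α) * fInf x) v /
            (α * f v + (1 - α) * fInf v)) ^ 2 := by ring
end
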